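/- For all F, L ⊆ X: γ_Fr(F) ∩ γ_Lin(L) = γ_Fr(F) ∩ γ_Lin(L ∪ F). -/
import Mathlib


open scoped Classical

namespace SharingPaper

/-- Finite first-order terms over an arity-indexed alphabet `F`, with
variables drawn from the countably infinite set `ℕ` (playing the role of `U`). -/
inductive Term (F : ℕ → Type) : Type
  | var : ℕ → Term F
  | app : (n : ℕ) → F n → (Fin n → Term F) → Term F

namespace Term

variable {F : ℕ → Type}

/-- The set `var(t)` of variables occurring in a term. -/
def vars : Term F → Set ℕ
  | var x => {x}
  | app n _ ts => ⋃ i : Fin n, vars (ts i)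

/-- Number of occurrences of the variable `x` in a term. -/
def count (x : ℕ) : Term F → ℕ
  | var y => if y = x then 1 else 0
  | app n _ ts => ∑ i : Fin n, count x (ts i)

/-- `χ(x, t) = min(2, number of occurrences of x in t)`. -/
def chiVar (x : ℕ) (t : Term F) : ℕ := min 2 (t.count x)

/-- `χ(t) = max {χ(x, t) | x ∈ U}`. -/
noncomputable def mult (t : Term F) : ℕ := sSup (Set.range fun x => chiVar x t)

end Term

variable {F : ℕ → Type}

/-- Substitutions, represented as maps from variables to terms. -/
abbrev Subst (F : ℕ → Type) := ℕ → Term F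

namespace Subst

/-- Homomorphic extension of a substitution to terms. -/
def apply (θ : Subst F) : Term F → Term F
  | .var x => θ x
  | .app n f ts => .app n f fun i => apply θ (ts i)

/-- `dom(θ) = {u | θ(u) ≠ u}`. -/
def dom (θ : Subst F) : Set ℕ := {x | θ x ≠ .var x}

/-- `rng(θ) = ∪ {var(θ(u)) | u ∈ dom(θ)}`. -/
def rng (θ : Subst F) : Set ℕ := ⋃ x ∈ dom θ, (θ x).vars

/-- A genuine substitution has a finite domain. -/
def IsSubst (θ : Subst F) : Prop := (dom θ).Finite

/-- Composition: `(θ ∘ ψ)(u) = θ(ψ(u))`. -/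
def comp (θ ψ : Subst F) : Subst F := fun x => θ.apply (ψ x)

/-- `θ` is idempotent iff `dom(θ) ∩ rng(θ) = ∅`. -/
def Idempotent (θ : Subst F) : Prop := dom θ ∩ rng θ = ∅

/-- `θ ≤ ψ` iff `ψ = δ ∘ θ` for some substitution `δ`. -/
def Le (θ ψ : Subst F) : Prop := ∃ δ : Subst F, IsSubst δ ∧ ψ = comp δ θ

/-- `occ(θ, y) = {u ∈ U | y ∈ var(θ(u))}`. -/
def occ (θ : Subst F) (y : ℕ) : Set ℕ := {u | y ∈ (θ u).vars}

/-- `α_Sh(θ) = {occ(θ, u) ∩ X | u ∈ U}`. -/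
def alphaSh (X : Set ℕ) (θ : Subst F) : Set (Set ℕ) :=
  Set.range fun u => occ θ u ∩ X

/-- An assignment `M ⊆ U` models `θ` iff for every `x ↦ t ∈ θ`, `x ∈ M ↔ var(t) ⊆ M`. -/
def Models (M : Set ℕ) (θ : Subst F) : Prop :=
  ∀ x ∈ dom θ, (x ∈ M ↔ (θ x).vars ⊆ M)

/-- `θ` satisfies a Pos abstraction `f` over `X` iff `M ∩ X ∈ f` for every
assignment `M` that models `θ`. -/
def Satisfies (X : Set ℕ) (θ : Subst F) (f : Set (Set ℕ)) : Prop :=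
  ∀ M : Set ℕ, Models M θ → M ∩ X ∈ f

end Subst

/-- The set of unifiers of a set of equations. -/
def unif (E : Set (Term F × Term F)) : Set (Subst F) :=
  {θ | Subst.IsSubst θ ∧ ∀ p ∈ E, θ.apply p.1 = θ.apply p.2}

/-- Most general unifiers. -/
def mgu (E : Set (Term F × Term F)) : Set (Subst F) :=
  {θ ∈ unif E | ∀ ψ ∈ unif E, Subst.Le θ ψ}

/-- Idempotent most general unifiers. -/
def imgu (E : Set (Term F × Term F)) : Set (Subst F) :=
  {θ ∈ mgu E | Subst.Idempotent θ}

/-- `γ_Sh(S)`. -/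
def gammaSh (X : Set ℕ) (S : Set (Set ℕ)) : Set (Set (Term F × Term F)) :=
  {E | E.Finite ∧ ∃ θ ∈ imgu E, Subst.alphaSh X θ ⊆ S}

/-- `γ_Fr(F)`. -/
def gammaFr (Fv : Set ℕ) : Set (Set (Term F × Term F)) :=
  {E | E.Finite ∧ ∃ θ ∈ imgu E, ∀ x ∈ Fv, ∃ y, θ x = Term.var y}

/-- `γ_Lin(L)`. -/
def gammaLin (L : Set ℕ) : Set (Set (Term F × Term F)) :=
  {E | E.Finite ∧ ∃ θ ∈ imgu E, ∀ x ∈ L, (θ x).mult ≤ 1}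

/-- `γ_Pos(f)`. -/
def gammaPos (X : Set ℕ) (f : Set (Set ℕ)) : Set (Set (Term F × Term F)) :=
  {E | E.Finite ∧ ∃ θ ∈ imgu E, Subst.Satisfies X θ f}

/-- `γ_SFL(S, F, L)`. -/
def gammaSFL (X : Set ℕ) (S : Set (Set ℕ)) (Fv L : Set ℕ) :
    Set (Set (Term F × Term F)) :=
  gammaSh X S ∩ gammaFr Fv ∩ gammaLin L

/-- `var(S) = ∪ {G | G ∈ S}`. -/
def varS {α : Type*} (S : Set (Set α)) : Set α := ⋃ G ∈ S, G

/-- `rel(t, S) = {G ∈ S | var(t) ∩ G ≠ ∅}`. -/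
def rel (t : Term F) (S : Set (Set ℕ)) : Set (Set ℕ) :=
  {G ∈ S | t.vars ∩ G ≠ ∅}

/-- Closure `S*`: the least superset of `S` closed under binary unions. -/
def closure {α : Type*} (S : Set (Set α)) : Set (Set α) :=
  ⋂₀ {S' | S ⊆ S' ∧ ∀ G1 ∈ S', ∀ G2 ∈ S', G1 ∪ G2 ∈ S'}

/-- Pairwise union `S1 ⊎ S2`. -/
def pairUnion {α : Type*} (S1 S2 : Set (Set α)) : Set (Set α) :=
  {G | ∃ G1 ∈ S1, ∃ G2 ∈ S2, G = G1 ∪ G2}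

/-- `S^{*F}`: the least superset `S'` of `S` such that `G1 ∪ G2 ∈ S'` whenever
`G1, G2 ∈ S'` and `G1 ∩ G2 ∩ F = ∅`. -/
def closureF {α : Type*} (Fv : Set α) (S : Set (Set α)) : Set (Set α) :=
  ⋂₀ {S' | S ⊆ S' ∧ ∀ G1 ∈ S', ∀ G2 ∈ S', G1 ∩ G2 ∩ Fv = ∅ → G1 ∪ G2 ∈ S'}

/-- `S1 ⊎_F S2`. -/
def pairUnionF {α : Type*} (Fv : Set α) (S1 S2 : Set (Set α)) : Set (Set α) :=
  {G | ∃ G1 ∈ S1, ∃ G2 ∈ S2, (G1 ≠ G2 → G1 ∩ G2 ∩ Fv = ∅) ∧ G = G1 ∪ G2}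

/-- The Filé decomposition `K_F(S)`. -/
def KF {α : Type*} (Fv : Set α) (S : Set (Set α)) : Set (Set (Set α)) :=
  {B | B ⊆ S ∧ Fv ⊆ varS B ∧
    ∀ G1 ∈ B, ∀ G2 ∈ B, G1 ≠ G2 → G1 ∩ G2 ∩ Fv = ∅}

/-- Abstract multiplicity `χ(t, S, L)`. -/
noncomputable def chiA (t : Term F) (S : Set (Set ℕ)) (L : Set ℕ) : ℕ :=
  if (∃ x ∈ varS S, Term.chiVar x t = 2) ∨
     (∃ x ∈ varS S, x ∈ t.vars \ L) ∨
     (∃ G ∈ S, ∃ x ∈ t.vars, ∃ y ∈ t.vars, x ≠ y ∧ x ∈ G ∧ y ∈ G)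
  then 2 else 1

/-- The term `t` is a variable belonging to the freeness set `Fv` ("t ∈ F"). -/
def IsFreeTerm (t : Term F) (Fv : Set ℕ) : Prop := ∃ x ∈ Fv, t = Term.var x

/-- The term `t` is a variable ("t ∈ U"). -/
def IsVarTerm (t : Term F) : Prop := ∃ x, t = Term.var x


lemma mult_var_le_one {F : ℕ → Type} (y : ℕ) : (Term.var y : Term F).mult ≤ 1 := by
  apply csSup_le (Set.range_nonempty _)
  rintro n ⟨x, rfl⟩
  simp only [Term.chiVar, Term.count]
  split <;> simp

lemma var_of_apply {F : ℕ → Type} (δ : Subst F) (t : Term F) (y : ℕ)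
    (h : δ.apply t = Term.var y) : ∃ z, t = Term.var z := by
  cases t with
  | var z => exact ⟨z, rfl⟩
  | app n f ts => simp only [Subst.apply] at h; exact absurd h (by simp)

/-- `γ_Fr(F) ∩ γ_Lin(L) = γ_Fr(F) ∩ γ_Lin(L ∪ F)`. -/
theorem stmt4 {F : ℕ → Type} (X : Set ℕ) (hX : X.Finite)
    (Fv L : Set ℕ) (hF : Fv ⊆ X) (hL : L ⊆ X) :
    (gammaFr Fv ∩ gammaLin L : Set (Set (Term F × Term F))) =
      gammaFr Fv ∩ gammaLin (L ∪ Fv) := by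
  ext E
  simp only [Set.mem_inter_iff, gammaFr, gammaLin, Set.mem_setOf_eq]
  constructor
  · rintro ⟨⟨hEf, θ₁, hθ₁i, hθ₁⟩, ⟨-, θ₂, hθ₂i, hθ₂⟩⟩
    refine ⟨⟨hEf, θ₁, hθ₁i, hθ₁⟩, hEf, θ₂, hθ₂i, ?_⟩
    rintro x (hx | hx)
    · exact hθ₂ x hx
    · obtain ⟨y, hy⟩ := hθ₁ x hx
      obtain ⟨δ', hδ', hcomp'⟩ := hθ₂i.1.2 θ₁ hθ₁i.1.1
      have h1 : θ₁ x = δ'.apply (θ₂ x) := by rw [hcomp']; rfl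
      obtain ⟨z, hz⟩ := var_of_apply δ' (θ₂ x) y (by rw [← h1, hy])
      rw [hz]; exact mult_var_le_one z
  · rintro ⟨hFr, hEf, θ₂, hθ₂i, hθ₂⟩
    exact ⟨hFr, hEf, θ₂, hθ₂i, fun x hx => hθ₂ x (Or.inl hx)⟩

end SharingPaper
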